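/- arXiv:1607.05816 — 5 statements merged into one kernel-verified Lean document; each statement's English description precedes it below -/
import Mathlib

section
/- Let X, Y be finite sets, let J be a convex lower semicontinuous function on nonnegative matrices R ∈ ℝ_{≥0}^{X×Y}, let H(R) = Σ_{ij} R_{ij}(log R_{ij} − 1) be minus the entropy, and suppose A := argmin J is nonempty. If (ε_k) is a sequence of positive reals converging to 0, then for each k the minimizer R_k of J + ε_k H exists and is unique, and the sequence (R_k) converges to the unique element of A of minimal entropy, i.e., to argmin_{R ∈ A} H(R). -/
open Filter Finset Topology

/-- Minus the entropy of a nonnegative matrix, `H(R) = Σ R_{ij}(log R_{ij} − 1)`. -/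
noncomputable def negEntropy {X Y : Type*} [Fintype X] [Fintype Y]
    (R : X → Y → ℝ) : ℝ :=
  ∑ i : X, ∑ j : Y, R i j * (Real.log (R i j) - 1)

section Aux

/-- The scalar function `x ↦ x (log x - 1)`. -/
noncomputable def entPhi (x : ℝ) : ℝ := x * (Real.log x - 1)

lemma entPhi_continuous : Continuous entPhi := by
  have : entPhi = fun x => x * Real.log x - x := by
    funext x; simp [entPhi]; ring
  rw [this]
  exact Real.continuous_mul_log.sub continuous_id

lemma entPhi_strictConvexOn : StrictConvexOn ℝ (Set.Ici (0:ℝ)) entPhi := by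
  have hlin : ConvexOn ℝ (Set.Ici (0:ℝ)) (fun x : ℝ => -x) := by
    refine ⟨convex_Ici 0, ?_⟩
    intro x _ y _ a b _ _ hab
    refine le_of_eq ?_
    simp only [smul_eq_mul]
    ring
  have := Real.strictConvexOn_mul_log.add_convexOn hlin
  have heq : ((fun x : ℝ => x * Real.log x) + fun x : ℝ => -x) = entPhi := by
    funext x; simp [entPhi, Pi.add_apply]; ring
  rwa [heq] at this

lemma entPhi_lb {x : ℝ} (hx : 0 ≤ x) : -1 ≤ entPhi x := by
  rcases eq_or_lt_of_le hx with h | h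
  · simp [entPhi, ← h]
  · have hlog := Real.one_sub_inv_le_log_of_pos h
    have h2 : x * (1 - x⁻¹) ≤ x * Real.log x :=
      mul_le_mul_of_nonneg_left hlog (le_of_lt h)
    have h3 : x * x⁻¹ = 1 := mul_inv_cancel₀ (ne_of_gt h)
    simp only [entPhi]
    nlinarith

lemma entPhi_big {x : ℝ} (hx : Real.exp 2 ≤ x) : x ≤ entPhi x := by
  have hx0 : 0 < x := lt_of_lt_of_le (Real.exp_pos 2) hx
  have hlog : (2:ℝ) ≤ Real.log x := by
    rw [← Real.log_exp 2]
    exact Real.log_le_log (Real.exp_pos 2) hx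
  simp only [entPhi]
  nlinarith

variable {X Y : Type*} [Fintype X] [Fintype Y]

lemma negEntropy_eq (R : X → Y → ℝ) :
    negEntropy R = ∑ p : X × Y, entPhi (R p.1 p.2) := by
  rw [negEntropy, Fintype.sum_prod_type]
  rfl

lemma negEntropy_continuous : Continuous (negEntropy : (X → Y → ℝ) → ℝ) := by
  have : (negEntropy : (X → Y → ℝ) → ℝ)
      = fun R => ∑ p : X × Y, entPhi (R p.1 p.2) := by
    funext R; exact negEntropy_eq R
  rw [this]
  refine continuous_finset_sum _ (fun p _ => ?_)
  exact entPhi_continuous.comp ((continuous_apply p.2).comp (continuous_apply p.1))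

lemma negEntropy_strictConvexOn :
    StrictConvexOn ℝ {R : X → Y → ℝ | ∀ i j, 0 ≤ R i j} negEntropy := by
  have hC : Convex ℝ {R : X → Y → ℝ | ∀ i j, 0 ≤ R i j} := by
    intro x hx y hy a b ha hb hab
    intro i j
    have : (a • x + b • y) i j = a * x i j + b * y i j := by
      simp [Pi.add_apply, Pi.smul_apply, smul_eq_mul]
    rw [this]
    exact add_nonneg (mul_nonneg ha (hx i j)) (mul_nonneg hb (hy i j))
  refine ⟨hC, ?_⟩
  intro x hx y hy hxy a b ha hb hab
  have hne : ∃ p : X × Y, x p.1 p.2 ≠ y p.1 p.2 := by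
    by_contra h
    push_neg at h
    apply hxy
    funext i j
    exact h (i, j)
  obtain ⟨p₀, hp₀⟩ := hne
  rw [negEntropy_eq, negEntropy_eq, negEntropy_eq, smul_eq_mul, smul_eq_mul,
    Finset.mul_sum, Finset.mul_sum, ← Finset.sum_add_distrib]
  refine Finset.sum_lt_sum (fun p _ => ?_) ⟨p₀, Finset.mem_univ p₀, ?_⟩
  · have hconv := entPhi_strictConvexOn.convexOn.2 (hx p.1 p.2) (hy p.1 p.2)
      (le_of_lt ha) (le_of_lt hb) hab
    have : (a • x + b • y) p.1 p.2 = a • x p.1 p.2 + b • y p.1 p.2 := by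
      simp [Pi.add_apply, Pi.smul_apply]
    rw [this]
    simpa [smul_eq_mul] using hconv
  · have hstrict := entPhi_strictConvexOn.2 (hx p₀.1 p₀.2) (hy p₀.1 p₀.2) hp₀ ha hb hab
    have : (a • x + b • y) p₀.1 p₀.2 = a • x p₀.1 p₀.2 + b • y p₀.1 p₀.2 := by
      simp [Pi.add_apply, Pi.smul_apply]
    rw [this]
    simpa [smul_eq_mul] using hstrict

lemma negEntropy_lb {R : X → Y → ℝ} (hR : ∀ i j, 0 ≤ R i j) :
    -(Fintype.card X * Fintype.card Y : ℝ) ≤ negEntropy R := by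
  rw [negEntropy_eq]
  have h1 : ∑ _p : X × Y, (-1 : ℝ) ≤ ∑ p : X × Y, entPhi (R p.1 p.2) :=
    Finset.sum_le_sum (fun p _ => entPhi_lb (hR p.1 p.2))
  have h2 : ∑ _p : X × Y, (-1 : ℝ) = -(Fintype.card X * Fintype.card Y : ℝ) := by
    rw [Finset.sum_const]
    simp [Fintype.card_prod]
  linarith [h1, h2.symm.le]

lemma negEntropy_ge_single {R : X → Y → ℝ} (hR : ∀ i j, 0 ≤ R i j) (i : X) (j : Y) :
    entPhi (R i j) - (Fintype.card X * Fintype.card Y : ℝ) ≤ negEntropy R := by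
  classical
  rw [negEntropy_eq]
  have h1 : entPhi (R i j) + ∑ p ∈ Finset.univ.erase (i, j), entPhi (R p.1 p.2)
      = ∑ p : X × Y, entPhi (R p.1 p.2) :=
    Finset.add_sum_erase _ (fun p : X × Y => entPhi (R p.1 p.2)) (Finset.mem_univ (i, j))
  have h2 : ∑ _p ∈ Finset.univ.erase (i, j), (-1 : ℝ)
      ≤ ∑ p ∈ Finset.univ.erase (i, j), entPhi (R p.1 p.2) :=
    Finset.sum_le_sum (fun p _ => entPhi_lb (hR p.1 p.2))
  have h3 : ∑ _p ∈ Finset.univ.erase (i, j), (-1 : ℝ)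
      = -((Finset.univ.erase (i, j)).card : ℝ) := by
    simp [Finset.sum_const]
  have h4 : ((Finset.univ.erase (i, j)).card : ℝ)
      ≤ (Fintype.card X * Fintype.card Y : ℝ) := by
    have : (Finset.univ.erase ((i, j) : X × Y)).card ≤ Fintype.card (X × Y) :=
      Finset.card_le_card (Finset.erase_subset _ _)
    rw [Fintype.card_prod] at this
    exact_mod_cast this
  linarith

/-- Entrywise bound on entropy sublevel sets. -/
lemma sublevel_entry_bound {R : X → Y → ℝ} (hR : ∀ i j, 0 ≤ R i j) {c : ℝ}
    (hc : negEntropy R ≤ c) (i : X) (j : Y) :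
    R i j ≤ max (Real.exp 2) (c + (Fintype.card X * Fintype.card Y : ℝ)) := by
  rcases le_or_gt (R i j) (Real.exp 2) with h | h
  · exact le_trans h (le_max_left _ _)
  · have h1 : R i j ≤ entPhi (R i j) := entPhi_big (le_of_lt h)
    have h2 := negEntropy_ge_single hR i j
    refine le_trans ?_ (le_max_right _ _)
    linarith

/-- Entropy sublevel sets within the nonnegative orthant are bounded. -/
lemma sublevel_isBounded (c : ℝ) :
    Bornology.IsBounded {R : X → Y → ℝ | (∀ i j, 0 ≤ R i j) ∧ negEntropy R ≤ c} := by
  set B := max (Real.exp 2) (c + (Fintype.card X * Fintype.card Y : ℝ)) with hB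
  have hB0 : 0 ≤ B := le_trans (le_of_lt (Real.exp_pos 2)) (le_max_left _ _)
  have hsub : {R : X → Y → ℝ | (∀ i j, 0 ≤ R i j) ∧ negEntropy R ≤ c}
      ⊆ Metric.closedBall 0 B := by
    intro R ⟨h1, h2⟩
    rw [Metric.mem_closedBall, dist_zero_right]
    rw [pi_norm_le_iff_of_nonneg hB0]
    intro i
    rw [pi_norm_le_iff_of_nonneg hB0]
    intro j
    rw [Real.norm_eq_abs, abs_le]
    constructor
    · linarith [h1 i j]
    · exact sublevel_entry_bound h1 h2 i j
  exact (Metric.isBounded_closedBall).subset hsub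

/-- Sublevel sets of a lower semicontinuous function on a closed set are closed. -/
lemma isClosed_sublevel_of_lsc {α : Type*} [TopologicalSpace α] {s : Set α} (hs : IsClosed s)
    {f : α → ℝ} (hf : LowerSemicontinuousOn f s) (c : ℝ) :
    IsClosed {x ∈ s | f x ≤ c} := by
  apply isClosed_of_closure_subset
  intro x hx
  have hxs : x ∈ s := hs.closure_subset (closure_mono (fun y hy => hy.1) hx)
  refine ⟨hxs, ?_⟩
  by_contra h
  push_neg at h
  have hev := hf x hxs c h
  have hne : (𝓝[{x ∈ s | f x ≤ c}] x).NeBot := mem_closure_iff_nhdsWithin_neBot.mp hx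
  have hev' : ∀ᶠ x' in 𝓝[{x ∈ s | f x ≤ c}] x, c < f x' :=
    nhdsWithin_mono x (fun y hy => hy.1) hev
  have hmem : ∀ᶠ x' in 𝓝[{x ∈ s | f x ≤ c}] x, x' ∈ {x ∈ s | f x ≤ c} :=
    eventually_mem_nhdsWithin
  obtain ⟨y, hy1, hy2⟩ := (hev'.and hmem).exists
  exact absurd hy2.2 (not_le.mpr hy1)

/-- Existence of minimizers for lsc functions with bounded sublevel sets, in a
finite-dimensional setting. -/
lemma exists_isMinOn_of_lsc {X Y : Type*} [Fintype X] [Fintype Y]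
    {s : Set (X → Y → ℝ)} (hs : IsClosed s)
    {f : (X → Y → ℝ) → ℝ} (hf : LowerSemicontinuousOn f s) {R₀ : X → Y → ℝ}
    (hR₀ : R₀ ∈ s) (hb : Bornology.IsBounded {R ∈ s | f R ≤ f R₀}) :
    ∃ Rm ∈ s, IsMinOn f s Rm := by
  set T : Set (X → Y → ℝ) := {R ∈ s | f R ≤ f R₀} with hT
  have hTclosed : IsClosed T := isClosed_sublevel_of_lsc hs hf (f R₀)
  have hTcomp : IsCompact T := Metric.isCompact_of_isClosed_isBounded hTclosed hb
  have hTne : T.Nonempty := ⟨R₀, hR₀, le_refl _⟩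
  haveI : Nonempty T := hTne.to_subtype
  set t : T → Set (X → Y → ℝ) := fun y => {R ∈ s | f R ≤ f y.1} with ht
  have htsub : ∀ y, t y ⊆ T := by
    intro y R hR
    exact ⟨hR.1, le_trans hR.2 y.2.2⟩
  have htclosed : ∀ y, IsClosed (t y) := fun y => isClosed_sublevel_of_lsc hs hf _
  have htcomp : ∀ y, IsCompact (t y) := fun y =>
    hTcomp.of_isClosed_subset (htclosed y) (htsub y)
  have htne : ∀ y, (t y).Nonempty := fun y => ⟨y.1, y.2.1, le_refl _⟩
  have htdir : Directed (· ⊇ ·) t := by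
    intro y z
    rcases le_total (f y.1) (f z.1) with h | h
    · exact ⟨y, subset_refl _, fun R hR => ⟨hR.1, le_trans hR.2 h⟩⟩
    · exact ⟨z, fun R hR => ⟨hR.1, le_trans hR.2 h⟩, subset_refl _⟩
  obtain ⟨Rm, hRm⟩ := IsCompact.nonempty_iInter_of_directed_nonempty_isCompact_isClosed
    t htdir htne htcomp htclosed
  simp only [Set.mem_iInter] at hRm
  have hRms : Rm ∈ s := (hRm ⟨R₀, hR₀, le_refl _⟩).1
  refine ⟨Rm, hRms, ?_⟩
  intro R hR
  rcases le_or_gt (f R) (f R₀) with h | h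
  · exact (hRm ⟨R, hR, h⟩).2
  · exact le_trans ((hRm ⟨R₀, hR₀, le_refl _⟩).2) (le_of_lt h)

lemma StrictConvexOn.const_mul {E : Type*} [AddCommMonoid E] [Module ℝ E]
    {s : Set E} {f : E → ℝ} (hf : StrictConvexOn ℝ s f) {c : ℝ} (hc : 0 < c) :
    StrictConvexOn ℝ s (fun x => c * f x) := by
  refine ⟨hf.1, ?_⟩
  intro x hx y hy hxy a b ha hb hab
  have h := hf.2 hx hy hxy ha hb hab
  have := mul_lt_mul_of_pos_left h hc
  calc c * f (a • x + b • y) < c * (a • f x + b • f y) := this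
    _ = a • (c * f x) + b • (c * f y) := by simp [smul_eq_mul]; ring

end Aux

/-- Convergence of the entropic regularization: the minimizers of `J + ε_k H` over the
nonnegative matrices exist, are unique, and converge to the minimal-entropy minimizer
of `J` as `ε_k → 0`. -/
theorem entropic_regularization_convergence {X Y : Type*} [Fintype X] [Fintype Y]
    (J : (X → Y → ℝ) → ℝ)
    (hJconv : ConvexOn ℝ {R : X → Y → ℝ | ∀ i j, 0 ≤ R i j} J)
    (hJlsc : LowerSemicontinuousOn J {R : X → Y → ℝ | ∀ i j, 0 ≤ R i j})
    (A : Set (X → Y → ℝ))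
    (hA : A = {R | (∀ i j, 0 ≤ R i j) ∧
      IsMinOn J {R' : X → Y → ℝ | ∀ i j, 0 ≤ R' i j} R})
    (hAne : A.Nonempty)
    (ε : ℕ → ℝ) (hεpos : ∀ k, 0 < ε k) (hεlim : Tendsto ε atTop (nhds 0)) :
    ∃ (Rseq : ℕ → X → Y → ℝ) (Rstar : X → Y → ℝ),
      (∀ k, (∀ i j, 0 ≤ Rseq k i j) ∧
        IsMinOn (fun R => J R + ε k * negEntropy R)
          {R : X → Y → ℝ | ∀ i j, 0 ≤ R i j} (Rseq k) ∧
        (∀ R', (∀ i j, 0 ≤ R' i j) →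
          IsMinOn (fun R => J R + ε k * negEntropy R)
            {R : X → Y → ℝ | ∀ i j, 0 ≤ R i j} R' → R' = Rseq k)) ∧
      Rstar ∈ A ∧ IsMinOn negEntropy A Rstar ∧
      (∀ R', R' ∈ A → IsMinOn negEntropy A R' → R' = Rstar) ∧
      Tendsto Rseq atTop (nhds Rstar) := by
  classical
  set C : Set (X → Y → ℝ) := {R | ∀ i j, 0 ≤ R i j} with hC
  have hCclosed : IsClosed C := by
    have hCeq : C = ⋂ (i : X), ⋂ (j : Y), (fun R : X → Y → ℝ => R i j) ⁻¹' Set.Ici 0 := by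
      ext R
      simp [hC, Set.mem_iInter]
    rw [hCeq]
    exact isClosed_iInter fun i => isClosed_iInter fun j =>
      IsClosed.preimage ((continuous_apply j).comp (continuous_apply i)) isClosed_Ici
  obtain ⟨Rmin, hRminA⟩ := hAne
  have hRminC : Rmin ∈ C := (hA ▸ hRminA).1
  have hRminMin : IsMinOn J C Rmin := (hA ▸ hRminA).2
  have hHcont : Continuous (negEntropy : (X → Y → ℝ) → ℝ) := negEntropy_continuous
  have hFlsc : ∀ k, LowerSemicontinuousOn (fun R => J R + ε k * negEntropy R) C :=
    fun k => hJlsc.add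
      ((continuous_const.mul hHcont).lowerSemicontinuous.lowerSemicontinuousOn _)
  have hsubF : ∀ k,
      {R ∈ C | (fun R => J R + ε k * negEntropy R) R
        ≤ (fun R => J R + ε k * negEntropy R) Rmin}
      ⊆ {R : X → Y → ℝ | (∀ i j, 0 ≤ R i j) ∧ negEntropy R ≤ negEntropy Rmin} := by
    intro k R hR
    obtain ⟨hRC, hRle⟩ := hR
    refine ⟨hRC, ?_⟩
    have h1 : J Rmin ≤ J R := isMinOn_iff.mp hRminMin R hRC
    have h2 : 0 < ε k := hεpos k
    simp only at hRle
    nlinarith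
  have hex : ∀ k, ∃ Rk ∈ C, IsMinOn (fun R => J R + ε k * negEntropy R) C Rk := by
    intro k
    refine exists_isMinOn_of_lsc hCclosed (hFlsc k) hRminC ?_
    exact (sublevel_isBounded (negEntropy Rmin)).subset (hsubF k)
  choose Rseq hRseqC hRseqMin using hex
  have hFstrict : ∀ k, StrictConvexOn ℝ C (fun R => J R + ε k * negEntropy R) := by
    intro k
    exact hJconv.add_strictConvexOn (negEntropy_strictConvexOn.const_mul (hεpos k))
  have hFuniq : ∀ k, ∀ R', (∀ i j, 0 ≤ R' i j) →
      IsMinOn (fun R => J R + ε k * negEntropy R) C R' → R' = Rseq k :=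
    fun k R' h1 h2 => (hFstrict k).eq_of_isMinOn h2 (hRseqMin k) h1 (hRseqC k)
  -- the set A
  have hAeq : A = {R ∈ C | J R ≤ J Rmin} := by
    rw [hA]
    ext R
    constructor
    · rintro ⟨h1, h2⟩
      exact ⟨h1, isMinOn_iff.mp h2 Rmin hRminC⟩
    · rintro ⟨h1, h2⟩
      refine ⟨h1, isMinOn_iff.mpr fun R' hR' => ?_⟩
      exact le_trans h2 (isMinOn_iff.mp hRminMin R' hR')
  have hAclosed : IsClosed A := by
    rw [hAeq]
    exact isClosed_sublevel_of_lsc hCclosed hJlsc (J Rmin)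
  have hAsubC : A ⊆ C := by
    rw [hAeq]
    exact fun R hR => hR.1
  have hAconv : Convex ℝ A := by
    rw [hAeq]
    exact hJconv.convex_le (J Rmin)
  have hHlscA : LowerSemicontinuousOn negEntropy A :=
    hHcont.lowerSemicontinuous.lowerSemicontinuousOn _
  have hexStar : ∃ Rs ∈ A, IsMinOn negEntropy A Rs := by
    refine exists_isMinOn_of_lsc hAclosed hHlscA hRminA ?_
    refine (sublevel_isBounded (negEntropy Rmin)).subset ?_
    rintro R ⟨h1, h2⟩
    exact ⟨hAsubC h1, h2⟩
  obtain ⟨Rstar, hRstarA, hRstarMin⟩ := hexStar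
  have hHstrictA : StrictConvexOn ℝ A negEntropy :=
    negEntropy_strictConvexOn.subset hAsubC hAconv
  have huniqStar : ∀ R', R' ∈ A → IsMinOn negEntropy A R' → R' = Rstar :=
    fun R' h1 h2 => hHstrictA.eq_of_isMinOn h2 hRstarMin h1 hRstarA
  -- convergence
  have hRstarC : Rstar ∈ C := hAsubC hRstarA
  have hRstarMinJ : IsMinOn J C Rstar := (hA ▸ hRstarA).2
  have hJeq : J Rstar = J Rmin :=
    le_antisymm (isMinOn_iff.mp hRstarMinJ Rmin hRminC) (isMinOn_iff.mp hRminMin Rstar hRstarC)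
  set n : ℝ := (Fintype.card X * Fintype.card Y : ℝ) with hn
  have hHk : ∀ k, negEntropy (Rseq k) ≤ negEntropy Rstar := by
    intro k
    have h1 := isMinOn_iff.mp (hRseqMin k) Rstar hRstarC
    have h2 : J Rstar ≤ J (Rseq k) := isMinOn_iff.mp hRstarMinJ _ (hRseqC k)
    nlinarith [hεpos k]
  have hJk : ∀ k, J (Rseq k) ≤ J Rmin + ε k * (negEntropy Rstar + n) := by
    intro k
    have h1 := isMinOn_iff.mp (hRseqMin k) Rstar hRstarC
    have h2 := negEntropy_lb (hRseqC k)
    rw [← hn] at h2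
    nlinarith [hεpos k]
  set K : Set (X → Y → ℝ) :=
    {R | (∀ i j, 0 ≤ R i j) ∧ negEntropy R ≤ negEntropy Rstar} with hK
  have hKclosed : IsClosed K := by
    have hKeq : K = C ∩ {R | negEntropy R ≤ negEntropy Rstar} := by
      ext R
      simp [hK, hC, Set.mem_inter_iff]
    rw [hKeq]
    exact hCclosed.inter (isClosed_le hHcont continuous_const)
  have hKcomp : IsCompact K :=
    Metric.isCompact_of_isClosed_isBounded hKclosed (sublevel_isBounded _)
  have hKmem : ∀ k, Rseq k ∈ K := fun k => ⟨hRseqC k, hHk k⟩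
  have htend : Tendsto Rseq atTop (nhds Rstar) := by
    apply tendsto_of_subseq_tendsto
    intro ns hns
    obtain ⟨a, haK, φ, hφmono, hφtend⟩ := hKcomp.tendsto_subseq (fun m => hKmem (ns m))
    have hφtend' : Tendsto (fun m => Rseq (ns (φ m))) atTop (nhds a) := hφtend
    have hεsub : Tendsto (fun m => ε (ns (φ m))) atTop (nhds 0) :=
      hεlim.comp (hns.comp hφmono.tendsto_atTop)
    have haC : a ∈ C := haK.1
    have haJ : J a ≤ J Rmin := by
      by_contra hcon
      push_neg at hcon
      obtain ⟨y, hy1, hy2⟩ := exists_between hcon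
      have hev1 : ∀ᶠ m in atTop, y < J (Rseq (ns (φ m))) := by
        have hlsc := hJlsc a haC y hy2
        have htd : Tendsto (fun m => Rseq (ns (φ m))) atTop (nhdsWithin a C) := by
          apply tendsto_nhdsWithin_of_tendsto_nhds_of_eventually_within _ hφtend'
          exact Eventually.of_forall (fun m => hRseqC _)
        exact htd.eventually hlsc
      have hev2 : ∀ᶠ m in atTop,
          J Rmin + ε (ns (φ m)) * (negEntropy Rstar + n) < y := by
        have hB : Tendsto (fun m => J Rmin + ε (ns (φ m)) * (negEntropy Rstar + n))
            atTop (nhds (J Rmin)) := by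
          have h0 := hεsub.mul_const (negEntropy Rstar + n)
          simp only [zero_mul] at h0
          simpa using tendsto_const_nhds.add h0
        exact hB.eventually_lt_const hy1
      obtain ⟨m, hm1, hm2⟩ := (hev1.and hev2).exists
      exact absurd (lt_of_le_of_lt (hJk (ns (φ m))) hm2) (not_lt.mpr (le_of_lt hm1))
    have haA : a ∈ A := by
      rw [hAeq]
      exact ⟨haC, haJ⟩
    have haMin : IsMinOn negEntropy A a := by
      refine isMinOn_iff.mpr fun R' hR' => ?_
      exact le_trans haK.2 (isMinOn_iff.mp hRstarMin R' hR')
    have ha : a = Rstar := huniqStar a haA haMin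
    exact ⟨φ, ha ▸ hφtend'⟩
  exact ⟨Rseq, Rstar, fun k => ⟨hRseqC k, hRseqMin k, hFuniq k⟩,
    hRstarA, hRstarMin, huniqStar, htend⟩
end

section
/- Let λ > 0, ε > 0, and p > 0. The unique minimizer over s ≥ 0 of the function s ↦ λ·KL(s|p) + ε·KL(s|z), for fixed z > 0, is s* = z^{ε/(ε+λ)} · p^{λ/(ε+λ)}, where KL(s|q) = s log(s/q) − s + q. -/
/-- Pointwise Kullback-Leibler divergence. -/
noncomputable def klPt (s z : ℝ) : ℝ := s * Real.log (s / z) - s + z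

lemma klPt_self (q : ℝ) : klPt q q = 0 := by
  unfold klPt
  rcases eq_or_ne q 0 with h | h
  · simp [h]
  · rw [div_self h, Real.log_one]; ring

lemma klPt_pos {s q : ℝ} (hs : 0 ≤ s) (hq : 0 < q) (hne : s ≠ q) : 0 < klPt s q := by
  rcases eq_or_lt_of_le hs with h | h
  · unfold klPt; rw [← h]; simpa using hq
  · have hqs : q / s ≠ 1 := fun hh => hne (by field_simp at hh; linarith)
    have hlog := Real.log_lt_sub_one_of_pos (div_pos hq h) hqs
    have hinv : Real.log (s / q) = - Real.log (q / s) := by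
      rw [← Real.log_inv, inv_div]
    unfold klPt
    rw [hinv]
    have h2 : s * Real.log (q / s) < s * (q / s - 1) :=
      (mul_lt_mul_of_pos_left hlog h)
    have h3 : s * (q / s - 1) = q - s := by field_simp
    nlinarith

lemma klPt_nonneg {s q : ℝ} (hs : 0 ≤ s) (hq : 0 < q) : 0 ≤ klPt s q := by
  rcases eq_or_ne s q with h | h
  · rw [h, klPt_self]
  · exact le_of_lt (klPt_pos hs hq h)

/-- The unique minimizer over `s ≥ 0` of `s ↦ λ·KL(s|p) + ε·KL(s|z)` is the
weighted geometric mean `z^{ε/(ε+λ)} · p^{λ/(ε+λ)}`. -/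
theorem prox_kl_of_kl (lam ε p z : ℝ) (hlam : 0 < lam) (hε : 0 < ε)
    (hp : 0 < p) (hz : 0 < z) :
    let sstar := z ^ (ε / (ε + lam)) * p ^ (lam / (ε + lam))
    sstar ∈ Set.Ici (0 : ℝ) ∧
    IsMinOn (fun s => lam * klPt s p + ε * klPt s z) (Set.Ici 0) sstar ∧
    ∀ s ∈ Set.Ici (0 : ℝ),
      lam * klPt s p + ε * klPt s z = lam * klPt sstar p + ε * klPt sstar z →
      s = sstar := by
  intro sstar
  have hsum : 0 < ε + lam := by linarith
  have hss : 0 < sstar :=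
    mul_pos (Real.rpow_pos_of_pos hz _) (Real.rpow_pos_of_pos hp _)
  have hlog : (ε + lam) * Real.log sstar = ε * Real.log z + lam * Real.log p := by
    have h1 : Real.log sstar
        = ε / (ε + lam) * Real.log z + lam / (ε + lam) * Real.log p := by
      rw [Real.log_mul (by positivity) (by positivity),
        Real.log_rpow hz, Real.log_rpow hp]
    rw [h1]; field_simp
  have key : ∀ s : ℝ, 0 ≤ s →
      lam * klPt s p + ε * klPt s z
        = (ε + lam) * klPt s sstar + (lam * p + ε * z - (ε + lam) * sstar) := by
    intro s hs
    rcases eq_or_lt_of_le hs with h | h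
    · unfold klPt; rw [← h]; ring_nf
    · unfold klPt
      rw [Real.log_div (ne_of_gt h) (ne_of_gt hp),
          Real.log_div (ne_of_gt h) (ne_of_gt hz),
          Real.log_div (ne_of_gt h) (ne_of_gt hss)]
      linear_combination s * hlog
  have hfstar : lam * klPt sstar p + ε * klPt sstar z
      = lam * p + ε * z - (ε + lam) * sstar := by
    rw [key sstar (le_of_lt hss), klPt_self]; ring
  refine ⟨le_of_lt hss, ?_, ?_⟩
  · intro s hs
    simp only [Set.mem_Ici] at hs
    have := klPt_nonneg hs hss
    simp only [Set.mem_setOf_eq]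
    rw [key s hs, hfstar]
    nlinarith
  · intro s hs heq
    simp only [Set.mem_Ici] at hs
    rw [key s hs, hfstar] at heq
    have h0 : (ε + lam) * klPt s sstar = 0 := by linarith
    have h1 : klPt s sstar = 0 := by
      rcases mul_eq_zero.mp h0 with h | h
      · linarith
      · exact h
    by_contra hne
    exact absurd h1 (ne_of_gt (klPt_pos hs hss hne))
end

section
/- Let λ > 0, ε > 0, p ≥ 0, z > 0. The unique minimizer over s ≥ 0 of s ↦ λ·|s − p| + ε·KL(s|z) is s* = min{ z·e^{λ/ε}, max{ z·e^{−λ/ε}, p } }, where KL(s|z) = s log(s/z) − s + z. -/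
lemma kl_strict {z t s : ℝ} (hz : 0 < z) (ht : 0 < t) (hs : 0 ≤ s)
    (hne : s ≠ t) :
    Real.log (t / z) * (s - t) < klPt s z - klPt t z := by
  rcases eq_or_lt_of_le hs with rfl | hs
  · simp only [klPt, zero_div, Real.log_zero, mul_zero, zero_mul, sub_zero, zero_add, zero_sub]
    rw [Real.log_div ht.ne' hz.ne']
    nlinarith
  · have key : Real.log (t / s) < t / s - 1 := by
      refine Real.log_lt_sub_one_of_pos (div_pos ht hs) ?_
      intro h
      exact hne ((div_eq_one_iff_eq hs.ne').1 h).symm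
    have h2 : s * Real.log (t / s) < s * (t / s - 1) :=
      mul_lt_mul_of_pos_left key hs
    have h3 : s * (t / s - 1) = t - s := by field_simp
    rw [Real.log_div ht.ne' hs.ne'] at h2
    simp only [klPt]
    rw [Real.log_div ht.ne' hz.ne', Real.log_div hs.ne' hz.ne']
    nlinarith

lemma kl_ge {z t s : ℝ} (hz : 0 < z) (ht : 0 < t) (hs : 0 ≤ s) :
    Real.log (t / z) * (s - t) ≤ klPt s z - klPt t z := by
  rcases eq_or_ne s t with rfl | hne
  · simp
  · exact (kl_strict hz ht hs hne).le

/-- The unique minimizer over `s ≥ 0` of `s ↦ λ·|s − p| + ε·KL(s|z)` is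
`min{ z·e^{λ/ε}, max{ z·e^{−λ/ε}, p } }` (KL-prox of the total variation divergence). -/
theorem prox_kl_of_tv (lam ε p z : ℝ) (hlam : 0 < lam) (hε : 0 < ε)
    (hp : 0 ≤ p) (hz : 0 < z) :
    let sstar := min (z * Real.exp (lam / ε)) (max (z * Real.exp (-lam / ε)) p)
    sstar ∈ Set.Ici (0 : ℝ) ∧
    IsMinOn (fun s => lam * |s - p| + ε * klPt s z) (Set.Ici 0) sstar ∧
    ∀ s ∈ Set.Ici (0 : ℝ),
      lam * |s - p| + ε * klPt s z = lam * |sstar - p| + ε * klPt sstar z →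
      s = sstar := by
  intro sstar
  have hdef : sstar = min (z * Real.exp (lam / ε)) (max (z * Real.exp (-lam / ε)) p) := rfl
  have hb : 0 < z * Real.exp (-lam / ε) := by positivity
  have ha : 0 < z * Real.exp (lam / ε) := by positivity
  have hba : z * Real.exp (-lam / ε) ≤ z * Real.exp (lam / ε) := by
    have : (-lam / ε : ℝ) ≤ lam / ε := by
      rw [neg_div]
      linarith [div_pos hlam hε]
    exact mul_le_mul_of_nonneg_left (Real.exp_le_exp.2 this) hz.le
  have hsstar : 0 < sstar := by
    rw [hdef]
    exact lt_min ha (lt_of_lt_of_le hb (le_max_left _ _))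
  set L : ℝ := Real.log (sstar / z) with hL
  have habs : ∀ s : ℝ, -(ε * L) * (s - sstar) ≤ lam * (|s - p| - |sstar - p|) := by
    intro s
    rcases le_or_gt p (z * Real.exp (-lam / ε)) with h1 | h1
    · have hss : sstar = z * Real.exp (-lam / ε) := by
        rw [hdef, max_eq_left h1, min_eq_right hba]
      have hLval : ε * L = -lam := by
        rw [hL, hss, mul_div_cancel_left₀ _ hz.ne', Real.log_exp]
        field_simp
      have h2 : |sstar - p| = sstar - p := abs_of_nonneg (by rw [hss]; linarith)
      have h3 := le_abs_self (s - p)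
      rw [hLval, h2]
      nlinarith
    · rcases le_or_gt (z * Real.exp (lam / ε)) p with h2 | h2
      · have hss : sstar = z * Real.exp (lam / ε) := by
          rw [hdef, min_eq_left (le_trans h2 (le_max_right _ _))]
        have hLval : ε * L = lam := by
          rw [hL, hss, mul_div_cancel_left₀ _ hz.ne', Real.log_exp]
          field_simp
        have h3 : |sstar - p| = p - sstar := by
          rw [abs_sub_comm]
          exact abs_of_nonneg (by rw [hss]; linarith)
        have h4 := neg_abs_le (s - p)
        rw [hLval, h3]
        nlinarith
      · have hss : sstar = p := by
          rw [hdef, max_eq_right h1.le, min_eq_right h2.le]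
        have hp0 : 0 < p := lt_trans hb h1
        have hub : L ≤ lam / ε := by
          rw [hL, hss]
          have : p / z ≤ Real.exp (lam / ε) := by
            rw [div_le_iff₀ hz]; linarith [h2.le]
          calc Real.log (p / z) ≤ Real.log (Real.exp (lam / ε)) :=
                Real.log_le_log (div_pos hp0 hz) this
            _ = lam / ε := Real.log_exp _
        have hlb : -(lam / ε) ≤ L := by
          rw [hL, hss]
          have : Real.exp (-lam / ε) ≤ p / z := by
            rw [le_div_iff₀ hz]; linarith [h1.le]
          calc -(lam / ε) = Real.log (Real.exp (-lam / ε)) := by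
                rw [Real.log_exp]; ring
            _ ≤ Real.log (p / z) := Real.log_le_log (Real.exp_pos _) this
        have hεl : ε * (lam / ε) = lam := by field_simp
        have hm1 := mul_le_mul_of_nonneg_left hlb hε.le
        have hm2 := mul_le_mul_of_nonneg_left hub hε.le
        have hbnd : |ε * L| ≤ lam := by
          rw [abs_le]
          constructor
          · nlinarith
          · nlinarith
        have h5 : -(ε * L) * (s - p) ≤ |ε * L| * |s - p| := by
          rw [neg_mul]
          calc -(ε * L * (s - p)) ≤ |ε * L * (s - p)| := neg_le_abs _
            _ = |ε * L| * |s - p| := abs_mul _ _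
        have h6 : |ε * L| * |s - p| ≤ lam * |s - p| :=
          mul_le_mul_of_nonneg_right hbnd (abs_nonneg _)
        rw [hss]
        simp only [sub_self, abs_zero, sub_zero]
        linarith
  have key : ∀ s : ℝ, 0 ≤ s → s ≠ sstar →
      lam * |sstar - p| + ε * klPt sstar z < lam * |s - p| + ε * klPt s z := by
    intro s hs hne
    have h1 := habs s
    have h2 := kl_strict hz hsstar hs hne
    have h3 : ε * (L * (s - sstar)) < ε * (klPt s z - klPt sstar z) :=
      mul_lt_mul_of_pos_left h2 hε
    nlinarith
  refine ⟨hsstar.le, ?_, ?_⟩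
  · rw [isMinOn_iff]
    intro s hs
    rcases eq_or_ne s sstar with rfl | hne
    · exact le_refl _
    · exact (key s hs hne).le
  · intro s hs heq
    by_contra hne
    exact (key s hs hne).ne' heq
end

section
/- Let (E, d) be the set of positive functions in L^∞(X) with bounded logarithm, endowed with the Thompson part metric d(r,s) = max{ log M(r/s), log M(s/r) } where M(r/s) = inf{ α ≥ 0 : r ≤ α s }. If T : E → E is an order-preserving map that is positively z-homogeneous for some z with |z| < 1 (i.e., T(αx) = α^z T(x) for α > 0), then T is a |z|-Lipschitz contraction for d. -/
/-- The cone of positive bounded functions with bounded logarithm. -/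
def thompsonCone (X : Type*) : Set (X → ℝ) :=
  {r | (∀ x, 0 < r x) ∧ ∃ C : ℝ, ∀ x, |Real.log (r x)| ≤ C}

/-- `M(r/s) = inf{α ≥ 0 : r ≤ α s}`. -/
noncomputable def thompsonM {X : Type*} (r s : X → ℝ) : ℝ :=
  sInf {α : ℝ | 0 ≤ α ∧ ∀ x, r x ≤ α * s x}

/-- The Thompson part metric `d(r,s) = max{log M(r/s), log M(s/r)}`. -/
noncomputable def thompsonDist {X : Type*} (r s : X → ℝ) : ℝ :=
  max (Real.log (thompsonM r s)) (Real.log (thompsonM s r))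

namespace ThompsonAux

lemma set_nonempty {X : Type*} {r s : X → ℝ} (hr : r ∈ thompsonCone X)
    (hs : s ∈ thompsonCone X) :
    {α : ℝ | 0 ≤ α ∧ ∀ x, r x ≤ α * s x}.Nonempty := by
  obtain ⟨hrpos, Cr, hCr⟩ := hr
  obtain ⟨hspos, Cs, hCs⟩ := hs
  refine ⟨Real.exp (Cr + Cs), (Real.exp_pos _).le, fun x => ?_⟩
  have h1 : r x ≤ Real.exp Cr := by
    have := (abs_le.1 (hCr x)).2
    calc r x = Real.exp (Real.log (r x)) := (Real.exp_log (hrpos x)).symm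
    _ ≤ Real.exp Cr := Real.exp_le_exp.2 this
  have h2 : Real.exp (-Cs) ≤ s x := by
    have := (abs_le.1 (hCs x)).1
    calc Real.exp (-Cs) ≤ Real.exp (Real.log (s x)) := Real.exp_le_exp.2 (by linarith)
    _ = s x := Real.exp_log (hspos x)
  calc r x ≤ Real.exp Cr := h1
  _ = Real.exp (Cr + Cs) * Real.exp (-Cs) := by rw [← Real.exp_add]; ring_nf
  _ ≤ Real.exp (Cr + Cs) * s x := by
      exact mul_le_mul_of_nonneg_left h2 (Real.exp_pos _).le

lemma set_bddBelow {X : Type*} (r s : X → ℝ) :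
    BddBelow {α : ℝ | 0 ≤ α ∧ ∀ x, r x ≤ α * s x} :=
  ⟨0, fun _ h => h.1⟩

lemma M_nonneg {X : Type*} {r s : X → ℝ} (hr : r ∈ thompsonCone X)
    (hs : s ∈ thompsonCone X) : 0 ≤ thompsonM r s :=
  le_csInf (set_nonempty hr hs) fun _ h => h.1

lemma le_M_mul {X : Type*} {r s : X → ℝ} (hr : r ∈ thompsonCone X)
    (hs : s ∈ thompsonCone X) : ∀ x, r x ≤ thompsonM r s * s x := by
  intro x
  have hspos := hs.1 x
  rw [← div_le_iff₀ hspos]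
  exact le_csInf (set_nonempty hr hs) fun α hα => by
    rw [div_le_iff₀ hspos]; exact hα.2 x

lemma M_pos {X : Type*} [Nonempty X] {r s : X → ℝ} (hr : r ∈ thompsonCone X)
    (hs : s ∈ thompsonCone X) : 0 < thompsonM r s := by
  obtain ⟨x₀⟩ := ‹Nonempty X›
  have h : r x₀ / s x₀ ≤ thompsonM r s := by
    refine le_csInf (set_nonempty hr hs) fun α hα => ?_
    rw [div_le_iff₀ (hs.1 x₀)]
    calc r x₀ ≤ α * s x₀ := hα.2 x₀
    _ = α * s x₀ := rfl
  exact lt_of_lt_of_le (div_pos (hr.1 x₀) (hs.1 x₀)) h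

lemma cone_smul {X : Type*} {s : X → ℝ} (hs : s ∈ thompsonCone X) {m : ℝ} (hm : 0 < m) :
    (fun x => m * s x) ∈ thompsonCone X := by
  obtain ⟨hpos, C, hC⟩ := hs
  refine ⟨fun x => mul_pos hm (hpos x), |Real.log m| + C, fun x => ?_⟩
  rw [Real.log_mul (ne_of_gt hm) (ne_of_gt (hpos x))]
  exact (abs_add_le _ _).trans (by linarith [hC x])

/-- key estimate: `log M(Tr,Ts) ≤ z * log M(r,s)` -/
lemma key {X : Type*} [Nonempty X] (T : (X → ℝ) → (X → ℝ)) (z : ℝ)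
    (hmaps : ∀ r ∈ thompsonCone X, T r ∈ thompsonCone X)
    (hmono : ∀ r ∈ thompsonCone X, ∀ s ∈ thompsonCone X,
      (∀ x, r x ≤ s x) → ∀ x, T r x ≤ T s x)
    (hhom : ∀ α : ℝ, 0 < α → ∀ r ∈ thompsonCone X,
      T (fun x => α * r x) = fun x => α ^ z * T r x)
    {r s : X → ℝ} (hr : r ∈ thompsonCone X) (hs : s ∈ thompsonCone X) :
    Real.log (thompsonM (T r) (T s)) ≤ z * Real.log (thompsonM r s) := by
  set m := thompsonM r s with hm
  have hmpos : 0 < m := M_pos hr hs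
  have hms : (fun x => m * s x) ∈ thompsonCone X := cone_smul hs hmpos
  have hTle : ∀ x, T r x ≤ m ^ z * T s x := by
    intro x
    have h1 : T r x ≤ T (fun x => m * s x) x :=
      hmono r hr _ hms (le_M_mul hr hs) x
    rwa [hhom m hmpos s hs] at h1
  have hMle : thompsonM (T r) (T s) ≤ m ^ z := by
    apply csInf_le (set_bddBelow _ _)
    exact ⟨(Real.rpow_pos_of_pos hmpos z).le, hTle⟩
  calc Real.log (thompsonM (T r) (T s)) ≤ Real.log (m ^ z) :=
        Real.log_le_log (M_pos (hmaps r hr) (hmaps s hs)) hMle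
  _ = z * Real.log m := Real.log_rpow hmpos z

lemma M_empty {X : Type*} (h : IsEmpty X) (r s : X → ℝ) : thompsonM r s = 0 := by
  unfold thompsonM
  have : {α : ℝ | 0 ≤ α ∧ ∀ x, r x ≤ α * s x} = Set.Ici 0 := by
    ext α; simp [h.forall_iff]
  rw [this, csInf_Ici]

end ThompsonAux

/-- An order-preserving positively `z`-homogeneous map with `|z| < 1` on the cone of
positive functions with bounded logarithm is a `|z|`-Lipschitz contraction for the
Thompson part metric. -/
theorem thompson_contraction {X : Type*} (T : (X → ℝ) → (X → ℝ)) (z : ℝ)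
    (hz : |z| < 1)
    (hmaps : ∀ r ∈ thompsonCone X, T r ∈ thompsonCone X)
    (hmono : ∀ r ∈ thompsonCone X, ∀ s ∈ thompsonCone X,
      (∀ x, r x ≤ s x) → ∀ x, T r x ≤ T s x)
    (hhom : ∀ α : ℝ, 0 < α → ∀ r ∈ thompsonCone X,
      T (fun x => α * r x) = fun x => α ^ z * T r x) :
    ∀ r ∈ thompsonCone X, ∀ s ∈ thompsonCone X,
      thompsonDist (T r) (T s) ≤ |z| * thompsonDist r s := by
  intro r hr s hs
  by_cases hX : Nonempty X
  · haveI := hX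
    set a := Real.log (thompsonM r s)
    set b := Real.log (thompsonM s r)
    have hab : 0 ≤ a + b := by
      obtain ⟨x₀⟩ := hX
      have h1 := ThompsonAux.le_M_mul hr hs x₀
      have h2 := ThompsonAux.le_M_mul hs hr x₀
      have hM1 := ThompsonAux.M_pos hr hs
      have hM2 := ThompsonAux.M_pos hs hr
      have hprod : 1 ≤ thompsonM r s * thompsonM s r := by
        have hrpos := hr.1 x₀
        have : r x₀ ≤ thompsonM r s * (thompsonM s r * r x₀) :=
          h1.trans (mul_le_mul_of_nonneg_left h2 hM1.le)
        nlinarith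
      have := Real.log_le_log one_pos hprod
      rwa [Real.log_one, Real.log_mul hM1.ne' hM2.ne'] at this
    have habs_a : |a| ≤ max a b := abs_le.2 ⟨by linarith [le_max_right a b], le_max_left a b⟩
    have habs_b : |b| ≤ max a b := abs_le.2 ⟨by linarith [le_max_left a b], le_max_right a b⟩
    have hA : Real.log (thompsonM (T r) (T s)) ≤ z * a :=
      ThompsonAux.key T z hmaps hmono hhom hr hs
    have hB : Real.log (thompsonM (T s) (T r)) ≤ z * b :=
      ThompsonAux.key T z hmaps hmono hhom hs hr
    have h1 : z * a ≤ |z| * max a b := by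
      calc z * a ≤ |z * a| := le_abs_self _
      _ = |z| * |a| := abs_mul z a
      _ ≤ |z| * max a b := mul_le_mul_of_nonneg_left habs_a (abs_nonneg z)
    have h2 : z * b ≤ |z| * max a b := by
      calc z * b ≤ |z * b| := le_abs_self _
      _ = |z| * |b| := abs_mul z b
      _ ≤ |z| * max a b := mul_le_mul_of_nonneg_left habs_b (abs_nonneg z)
    exact max_le (hA.trans h1) (hB.trans h2)
  · have hE : IsEmpty X := not_nonempty_iff.mp hX
    simp [thompsonDist, ThompsonAux.M_empty hE, Real.log_zero]
end

section
/- Let φ be an entropy function with conjugate φ* and recession slope φ'_∞. For nonnegative reals u, v, the convex conjugate of the perspective divergence (s,h) ↦ D_φ(s|h) (jointly in both variables) is the indicator function of the set B_φ = { (a,b) ∈ ℝ² : b ≤ −φ*(a) }. -/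
open Filter

/-- Perspective divergence `D_φ(s|h)`: `h·φ(s/h)` for `h > 0`, `s·φ'_∞` for `h = 0`
(convention `0·∞ = 0`), and `+∞` off the nonnegative quadrant. -/
noncomputable def perspDivFull (φ : ℝ → EReal) (φinf : EReal) (s h : ℝ) : EReal :=
  if 0 ≤ s ∧ 0 ≤ h then
    (if 0 < h then (h : EReal) * φ (s / h) else (s : EReal) * φinf)
  else ⊤

/-- Legendre conjugate of `φ`. -/
noncomputable def eConj (φ : ℝ → EReal) (a : ℝ) : EReal :=
  ⨆ s : ℝ, (((a * s : ℝ) : EReal) - φ s)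

lemma persp_zero_zero (φ : ℝ → EReal) (φinf : EReal) :
    perspDivFull φ φinf 0 0 = 0 := by
  simp [perspDivFull]

/-- The convex conjugate of the joint perspective divergence `(s,h) ↦ D_φ(s|h)` is the
indicator of the set `B_φ = {(a,b) : b ≤ −φ*(a)}`. -/
theorem perspDiv_conjugate_indicator (φ : ℝ → EReal) (φinf : EReal)
    (hconv : ∀ a b t : ℝ, 0 ≤ t → t ≤ 1 →
      φ (t * a + (1 - t) * b) ≤ (t : EReal) * φ a + ((1 - t : ℝ) : EReal) * φ b)
    (hlsc : LowerSemicontinuous φ)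
    (hdom_neg : ∀ s : ℝ, s < 0 → φ s = ⊤)
    (hdom_pos : ∃ s : ℝ, 0 < s ∧ φ s ≠ ⊤)
    (hφinf : Tendsto (fun x : ℝ => φ x / (x : EReal)) atTop (nhds φinf)) :
    ∀ a b : ℝ,
      ((b : EReal) ≤ -eConj φ a →
        (⨆ s : ℝ, ⨆ h : ℝ, (((a * s + b * h : ℝ) : EReal) - perspDivFull φ φinf s h))
          = 0) ∧
      (¬ ((b : EReal) ≤ -eConj φ a) →
        (⨆ s : ℝ, ⨆ h : ℝ, (((a * s + b * h : ℝ) : EReal) - perspDivFull φ φinf s h))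
          = ⊤) := by
  intro a b
  have hS0 : (0 : EReal) ≤
      ⨆ s : ℝ, ⨆ h : ℝ, (((a * s + b * h : ℝ) : EReal) - perspDivFull φ φinf s h) := by
    have h1 : (((a * 0 + b * 0 : ℝ) : EReal) - perspDivFull φ φinf 0 0) = 0 := by
      rw [persp_zero_zero]; norm_num
    calc (0 : EReal) = ((a * 0 + b * 0 : ℝ) : EReal) - perspDivFull φ φinf 0 0 := h1.symm
      _ ≤ ⨆ h : ℝ, (((a * 0 + b * h : ℝ) : EReal) - perspDivFull φ φinf 0 h) :=
          le_iSup (fun h : ℝ => (((a * 0 + b * h : ℝ) : EReal) - perspDivFull φ φinf 0 h)) 0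
      _ ≤ _ := le_iSup (fun s : ℝ =>
          ⨆ h : ℝ, (((a * s + b * h : ℝ) : EReal) - perspDivFull φ φinf s h)) 0
  constructor
  · -- case b ≤ -φ*(a): sup = 0
    intro hb
    -- eConj is finite
    have hnt : eConj φ a ≠ ⊤ := by
      intro h
      rw [h] at hb
      simp at hb
    have hterm : ∀ s : ℝ, ((a * s : ℝ) : EReal) - φ s ≤ eConj φ a := fun s =>
      le_iSup (fun s : ℝ => ((a * s : ℝ) : EReal) - φ s) s
    have hφnb : ∀ s : ℝ, φ s ≠ ⊥ := by
      intro s hsb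
      have := hterm s
      rw [hsb, EReal.coe_sub_bot] at this
      exact hnt (top_le_iff.mp this)
    have hnb : eConj φ a ≠ ⊥ := by
      obtain ⟨s1, hs1, hφs1⟩ := hdom_pos
      intro h
      have := hterm s1
      rw [h, le_bot_iff] at this
      have : φ s1 = ⊤ := by
        by_contra hne
        lift φ s1 to ℝ using ⟨hne, hφnb s1⟩ with y
        rw [← EReal.coe_sub] at this
        exact EReal.coe_ne_bot _ this
      exact hφs1 this
    obtain ⟨c, hc⟩ : ∃ c : ℝ, eConj φ a = (c : EReal) := by
      lift eConj φ a to ℝ using ⟨hnt, hnb⟩ with x; exact ⟨x, rfl⟩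
    have hbc : b ≤ -c := by
      rw [hc] at hb
      rw [← EReal.coe_neg] at hb
      exact_mod_cast hb
    -- lower bound on φ: φ x ≥ a x - c
    have hφbound : ∀ x : ℝ, ((a * x - c : ℝ) : EReal) ≤ φ x := by
      intro x
      have h1 := hterm x
      rw [hc] at h1
      rcases eq_or_ne (φ x) ⊤ with hx | hx
      · rw [hx]; exact le_top
      · lift φ x to ℝ using ⟨hx, hφnb x⟩ with y
        rw [← EReal.coe_sub] at h1
        have : a * x - y ≤ c := by exact_mod_cast h1
        exact_mod_cast (by linarith : a * x - c ≤ y)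
    -- a ≤ φinf
    have hainf : (a : EReal) ≤ φinf := by
      have hf : Tendsto (fun x : ℝ => ((a - c / x : ℝ) : EReal)) atTop (nhds (a : EReal)) := by
        rw [EReal.tendsto_coe]
        have : Tendsto (fun x : ℝ => a - c / x) atTop (nhds (a - 0)) :=
          tendsto_const_nhds.sub (tendsto_const_nhds.div_atTop tendsto_id)
        simpa using this
      refine le_of_tendsto_of_tendsto hf hφinf ?_
      filter_upwards [eventually_gt_atTop (0 : ℝ)] with x hx
      have h1 : ((a - c / x : ℝ) : EReal) = ((a * x - c : ℝ) : EReal) / (x : EReal) := by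
        rw [← EReal.coe_div]
        congr 1
        field_simp
      rw [h1]
      exact EReal.div_le_div_right_of_nonneg (by exact_mod_cast hx.le)
        (hφbound x)
    -- sup ≤ 0
    refine le_antisymm ?_ hS0
    refine iSup_le fun s => iSup_le fun h => ?_
    rw [EReal.sub_le_iff_le_add (by simp) (by simp), zero_add]
    unfold perspDivFull
    by_cases hq : 0 ≤ s ∧ 0 ≤ h
    · rw [if_pos hq]
      by_cases hh : 0 < h
      · rw [if_pos hh]
        rcases eq_or_ne (φ (s / h)) ⊤ with hx | hx
        · rw [hx, EReal.mul_top_of_pos (by exact_mod_cast hh)]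
          exact le_top
        · lift φ (s / h) to ℝ using ⟨hx, hφnb _⟩ with y hy
          have h1 : a * (s / h) - c ≤ y := by
            have := hφbound (s / h)
            rw [← hy] at this
            exact_mod_cast this
          rw [← EReal.coe_mul]
          have hh' : h ≠ 0 := ne_of_gt hh
          have : a * s + b * h ≤ h * y := by
            have h2 : (a * (s / h) - c) * h ≤ y * h :=
              mul_le_mul_of_nonneg_right h1 hh.le
            have h3 : a * (s / h) * h = a * s := by field_simp
            nlinarith [mul_le_mul_of_nonneg_right hbc hh.le]
          exact_mod_cast this
      · rw [if_neg hh]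
        have hh0 : h = 0 := le_antisymm (not_lt.mp hh) hq.2
        subst hh0
        rcases eq_or_lt_of_le hq.1 with hs0 | hs0
        · rw [← hs0]; norm_num
        · have : (s : EReal) * (a : EReal) ≤ (s : EReal) * φinf :=
            mul_le_mul_of_nonneg_left hainf (by exact_mod_cast hq.1)
          calc ((a * s + b * 0 : ℝ) : EReal) = ((s * a : ℝ) : EReal) := by norm_num [mul_comm]
            _ = (s : EReal) * (a : EReal) := EReal.coe_mul s a
            _ ≤ (s : EReal) * φinf := this
    · rw [if_neg hq]; exact le_top
  · -- case ¬ b ≤ -φ*(a): sup = ⊤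
    intro hb
    have h1 : (-b : ℝ) < eConj φ a := by
      rw [not_le] at hb
      have := EReal.neg_lt_comm.mp hb
      rwa [← EReal.coe_neg] at this
    rw [eConj, lt_iSup_iff] at h1
    obtain ⟨s₀, hs₀⟩ := h1
    have hs₀nn : 0 ≤ s₀ := by
      by_contra hneg
      rw [hdom_neg s₀ (not_le.mp hneg), EReal.sub_top] at hs₀
      exact absurd hs₀ (by simp)
    have hφnt : φ s₀ ≠ ⊤ := by
      intro h
      rw [h, EReal.sub_top] at hs₀
      exact absurd hs₀ (by simp)
    rcases eq_or_ne (φ s₀) ⊥ with hbot | hnb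
    · -- φ s₀ = ⊥ : take s = s₀, h = 1 gives ⊤
      rw [eq_top_iff]
      have hD : perspDivFull φ φinf s₀ 1 = ⊥ := by
        unfold perspDivFull
        rw [if_pos ⟨hs₀nn, zero_le_one⟩, if_pos one_pos]
        simp [hbot]
      calc (⊤ : EReal) = ((a * s₀ + b * 1 : ℝ) : EReal) - perspDivFull φ φinf s₀ 1 := by
            rw [hD, EReal.coe_sub_bot]
        _ ≤ ⨆ h : ℝ, (((a * s₀ + b * h : ℝ) : EReal) - perspDivFull φ φinf s₀ h) :=
            le_iSup (fun h : ℝ => (((a * s₀ + b * h : ℝ) : EReal) - perspDivFull φ φinf s₀ h)) 1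
        _ ≤ _ := le_iSup (fun s : ℝ =>
            ⨆ h : ℝ, (((a * s + b * h : ℝ) : EReal) - perspDivFull φ φinf s h)) s₀
    · lift φ s₀ to ℝ using ⟨hφnt, hnb⟩ with y hy
      have hε : 0 < a * s₀ + b - y := by
        rw [← EReal.coe_sub] at hs₀
        have : -b < a * s₀ - y := by exact_mod_cast hs₀
        linarith
      set ε := a * s₀ + b - y with hεdef
      rw [EReal.eq_top_iff_forall_lt]
      intro M
      obtain ⟨t, ht1, htM⟩ : ∃ t : ℝ, 0 < t ∧ M < t * ε := by
        refine ⟨max 1 ((M + 1) / ε), lt_of_lt_of_le one_pos (le_max_left _ _), ?_⟩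
        have h2 : (M + 1) / ε ≤ max 1 ((M + 1) / ε) := le_max_right _ _
        have h3 : (M + 1) / ε * ε ≤ max 1 ((M + 1) / ε) * ε :=
          mul_le_mul_of_nonneg_right h2 hε.le
        rw [div_mul_cancel₀ _ (ne_of_gt hε)] at h3
        linarith
      have hD : perspDivFull φ φinf (t * s₀) t = ((t * y : ℝ) : EReal) := by
        unfold perspDivFull
        rw [if_pos ⟨mul_nonneg ht1.le hs₀nn, ht1.le⟩, if_pos ht1]
        rw [mul_div_cancel_left₀ _ (ne_of_gt ht1), ← hy, EReal.coe_mul]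
      have hterm : ((a * (t * s₀) + b * t : ℝ) : EReal) - perspDivFull φ φinf (t * s₀) t
          = ((t * ε : ℝ) : EReal) := by
        rw [hD, ← EReal.coe_sub]
        congr 1
        rw [hεdef]; ring
      calc (M : EReal) < ((t * ε : ℝ) : EReal) := by exact_mod_cast htM
        _ = ((a * (t * s₀) + b * t : ℝ) : EReal) - perspDivFull φ φinf (t * s₀) t := hterm.symm
        _ ≤ ⨆ h : ℝ, (((a * (t * s₀) + b * h : ℝ) : EReal)
              - perspDivFull φ φinf (t * s₀) h) :=
            le_iSup (fun h : ℝ => (((a * (t * s₀) + b * h : ℝ) : EReal)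
              - perspDivFull φ φinf (t * s₀) h)) t
        _ ≤ _ := le_iSup (fun s : ℝ =>
            ⨆ h : ℝ, (((a * s + b * h : ℝ) : EReal) - perspDivFull φ φinf s h)) (t * s₀)
end
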